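/- arXiv:math-ph/0701002 — 4 statements merged into one kernel-verified Lean document; each statement's English description precedes it below -/
import Mathlib

section
/- For every n ≥ 1, the double sum Σ_{P partition of [n]} Σ_{P' partition of the set of blocks of P} (|P'| - 1)! is at most n! · e^{n+1}. -/
open Finset

namespace DPSaux

variable {β : Type*} [DecidableEq β]

/-- Remove a part from a finpartition of a finset. -/
def delete {s : Finset β} (P : Finpartition s) (b : Finset β) (hb : b ∈ P.parts) :
    Finpartition (s \ b) where
  parts := P.parts.erase b
  supIndep := P.supIndep.subset (erase_subset _ _)
  sup_parts := by
    ext a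
    simp only [Finset.mem_sup, mem_erase, mem_sdiff, id]
    constructor
    · rintro ⟨u, ⟨hub, hu⟩, hau⟩
      exact ⟨P.le hu hau, fun hab => hub (P.eq_of_mem_parts hu hb hau hab)⟩
    · rintro ⟨has, hab⟩
      exact ⟨P.part a, ⟨fun h => hab (h ▸ P.mem_part has), P.part_mem.2 has⟩, P.mem_part has⟩
  bot_notMem h := P.bot_notMem (erase_subset _ _ h)

@[simp] lemma parts_delete {s : Finset β} (P : Finpartition s) (b : Finset β)
    (hb : b ∈ P.parts) : (delete P b hb).parts = P.parts.erase b := rfl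

lemma recursion {s : Finset β} {x : β} (hx : x ∈ s) (f : ℕ → ℝ) :
    ∑ P : Finpartition s, f P.parts.card
      = ∑ B ∈ (s.erase x).powerset,
          ∑ R : Finpartition ((s.erase x) \ B), f (R.parts.card + 1) := by
  have hmaps : ∀ P ∈ (univ : Finset (Finpartition s)),
      (P.part x).erase x ∈ (s.erase x).powerset := by
    intro P _
    exact mem_powerset.2 (erase_subset_erase x (P.le (P.part_mem.2 hx)))
  rw [← sum_fiberwise_of_maps_to hmaps (fun P => f P.parts.card)]
  refine sum_congr rfl fun B hB => ?_
  rw [mem_powerset] at hB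
  have hxB : x ∉ B := fun h => (mem_erase.1 (hB h)).1 rfl
  have hbne : (insert x B : Finset β) ≠ (⊥ : Finset β) := by
    simpa using insert_ne_empty x B
  have hdisj : Disjoint ((s.erase x) \ B) (insert x B) := by
    rw [disjoint_left]
    intro a ha hab
    rw [mem_sdiff, mem_erase] at ha
    rcases mem_insert.1 hab with h | h
    · exact ha.1.1 h
    · exact ha.2 h
  have hsup : ((s.erase x) \ B) ⊔ insert x B = s := by
    ext a
    simp only [sup_eq_union, mem_union, mem_sdiff, mem_erase, mem_insert]
    constructor
    · rintro (⟨⟨_, has⟩, _⟩ | (rfl | h))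
      · exact has
      · exact hx
      · exact (mem_erase.1 (hB h)).2
    · intro has
      by_cases hax : a = x
      · exact Or.inr (Or.inl hax)
      · by_cases haB : a ∈ B
        · exact Or.inr (Or.inr haB)
        · exact Or.inl ⟨⟨hax, has⟩, haB⟩
  have hpartx : ∀ P : Finpartition s, x ∈ P.part x := fun P => P.mem_part hx
  -- the sdiff identity used for `copy`
  have hcopy : ∀ P : Finpartition s, (P.part x).erase x = B →
      s \ P.part x = (s.erase x) \ B := by
    intro P hP
    rw [← hP]
    ext a
    simp only [mem_sdiff, mem_erase]
    constructor
    · rintro ⟨has, hap⟩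
      exact ⟨⟨fun h => hap (h ▸ hpartx P), has⟩, fun h => hap h.2⟩
    · rintro ⟨⟨hax, has⟩, h2⟩
      exact ⟨has, fun hap => h2 ⟨hax, hap⟩⟩
  refine sum_bij'
    (i := fun P hP => (delete P (P.part x) (P.part_mem.2 hx)).copy
      (hcopy P (by simpa using (mem_filter.1 hP).2)))
    (j := fun R _ => R.extend hbne hdisj hsup) ?_ ?_ ?_ ?_ ?_
  · intro P hP
    exact mem_univ _
  · intro R _
    refine mem_filter.2 ⟨mem_univ _, ?_⟩
    have hmem : insert x B ∈ (R.extend hbne hdisj hsup).parts := by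
      simp [Finpartition.extend]
    have : (R.extend hbne hdisj hsup).part x = insert x B :=
      Finpartition.part_eq_of_mem _ hmem (mem_insert_self x B)
    rw [this, erase_insert hxB]
  · intro P hP
    have hP' : (P.part x).erase x = B := by simpa using (mem_filter.1 hP).2
    apply Finpartition.ext
    show insert (insert x B) ((P.parts.erase (P.part x))) = P.parts
    have : insert x B = P.part x := by rw [← hP', insert_erase (hpartx P)]
    rw [this, insert_erase (P.part_mem.2 hx)]
  · intro R _
    have hmem : insert x B ∈ (R.extend hbne hdisj hsup).parts := by
      simp [Finpartition.extend]
    have hpx : (R.extend hbne hdisj hsup).part x = insert x B :=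
      Finpartition.part_eq_of_mem _ hmem (mem_insert_self x B)
    apply Finpartition.ext
    show ((R.extend hbne hdisj hsup).parts.erase
        ((R.extend hbne hdisj hsup).part x)) = R.parts
    rw [hpx]
    show (insert (insert x B) R.parts).erase (insert x B) = R.parts
    apply erase_insert
    intro hmem'
    have := R.le hmem' (mem_insert_self x B)
    rw [mem_sdiff, mem_erase] at this
    exact this.1.1 rfl
  · intro P hP
    have : ((delete P (P.part x) (P.part_mem.2 hx)).copy
        (hcopy P (by simpa using (mem_filter.1 hP).2))).parts.card + 1
        = P.parts.card := by
      show (P.parts.erase (P.part x)).card + 1 = P.parts.card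
      exact card_erase_add_one (P.part_mem.2 hx)
    rw [this]

lemma key_bound (t A : ℝ) (ht : 0 ≤ t) (hA : 1 ≤ A) (hmain : t * Real.exp A⁻¹ ≤ A) :
    ∀ m : ℕ, ∀ {β : Type*} [DecidableEq β] (s : Finset β), s.card = m → ∀ c : ℕ,
      (∑ P : Finpartition s, ((P.parts.card + c - 1).factorial : ℝ) * t ^ P.parts.card)
        ≤ ((m + c - 1).factorial : ℝ) * A ^ m := by
  have hA0 : (0 : ℝ) < A := lt_of_lt_of_le one_pos hA
  intro m
  induction m using Nat.strong_induction_on with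
  | _ m IH =>
  intro β _ s hs c
  rcases Nat.eq_zero_or_pos m with hm | hm
  · subst hm
    rw [card_eq_zero] at hs
    subst hs
    have hparts : ∀ P : Finpartition (∅ : Finset β), P.parts = ∅ := fun P =>
      Finpartition.parts_eq_empty_iff.2 rfl
    have h1 : ∀ P : Finpartition (∅ : Finset β), P = ⊥ := fun P =>
      Finpartition.ext (by rw [hparts P, hparts ⊥])
    have huniv : (univ : Finset (Finpartition (∅ : Finset β))) = {⊥} := by
      ext P
      simp [h1 P]
    rw [huniv, sum_singleton, hparts, card_empty]
    simp
  · obtain ⟨x, hx⟩ : ∃ x, x ∈ s := Finset.card_pos.1 (hs ▸ hm)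
    obtain ⟨M, hmM⟩ : ∃ M, m = M + 1 := ⟨m - 1, by omega⟩
    have hcard_erase : (s.erase x).card = M := by rw [card_erase_of_mem hx, hs]; omega
    rw [recursion hx (fun k => ((k + c - 1).factorial : ℝ) * t ^ k)]
    have hinner : ∀ B ∈ (s.erase x).powerset,
        (∑ R : Finpartition ((s.erase x) \ B),
            ((R.parts.card + 1 + c - 1).factorial : ℝ) * t ^ (R.parts.card + 1))
        ≤ t * (((M - B.card + (c + 1) - 1).factorial : ℝ) * A ^ (M - B.card)) := by
      intro B hB
      rw [mem_powerset] at hB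
      have hcardB : ((s.erase x) \ B).card = M - B.card := by
        rw [card_sdiff_of_subset hB, hcard_erase]
      have hlt : M - B.card < m := by omega
      have hIH := IH (M - B.card) hlt ((s.erase x) \ B) hcardB (c + 1)
      calc ∑ R : Finpartition ((s.erase x) \ B),
              ((R.parts.card + 1 + c - 1).factorial : ℝ) * t ^ (R.parts.card + 1)
          = t * ∑ R : Finpartition ((s.erase x) \ B),
              ((R.parts.card + (c + 1) - 1).factorial : ℝ) * t ^ R.parts.card := by
            rw [mul_sum]
            refine Fintype.sum_congr _ _ fun R => ?_
            have h1 : R.parts.card + 1 + c - 1 = R.parts.card + (c + 1) - 1 := by omega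
            rw [h1, pow_succ]
            ring
        _ ≤ t * (((M - B.card + (c + 1) - 1).factorial : ℝ) * A ^ (M - B.card)) :=
            mul_le_mul_of_nonneg_left hIH ht
    refine le_trans (sum_le_sum hinner) ?_
    rw [sum_powerset_apply_card
      (fun i => t * (((M - i + (c + 1) - 1).factorial : ℝ) * A ^ (M - i))), hcard_erase]
    -- final numeric estimate
    have hstep : ∀ i ∈ range (M + 1),
        (M.choose i) • (t * (((M - i + (c + 1) - 1).factorial : ℝ) * A ^ (M - i)))
          ≤ (t * ((M + c).factorial : ℝ) * A ^ M) * ((A⁻¹) ^ i / (i.factorial : ℝ)) := by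
      intro i hi
      rw [mem_range] at hi
      have hiM : i ≤ M := by omega
      have h1 : M - i + (c + 1) - 1 = M - i + c := by omega
      have hnat : (M.choose i) * (M - i + c).factorial * i.factorial
          ≤ (M + c).factorial := by
        calc (M.choose i) * (M - i + c).factorial * i.factorial
            ≤ ((M + c).choose i) * (M - i + c).factorial * i.factorial := by
              exact Nat.mul_le_mul_right _ (Nat.mul_le_mul_right _
                (Nat.choose_le_choose i (by omega)))
          _ = (M + c).factorial := by
              have h2 : M - i + c = M + c - i := by omega
              rw [h2, mul_right_comm]
              exact Nat.choose_mul_factorial_mul_factorial (by omega)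
      have hnatR : (M.choose i : ℝ) * ((M - i + c).factorial : ℝ) * (i.factorial : ℝ)
          ≤ ((M + c).factorial : ℝ) := by exact_mod_cast hnat
      have hApow : (0:ℝ) < A ^ i := pow_pos hA0 i
      have hpow : A ^ (M - i) = A ^ M * (A⁻¹) ^ i := by
        rw [inv_pow, eq_mul_inv_iff_mul_eq₀ (ne_of_gt hApow), ← pow_add]
        congr 1
        omega
      rw [h1, nsmul_eq_mul, hpow, div_eq_mul_inv]
      have hfi : (0:ℝ) < (i.factorial : ℝ) := by positivity
      calc (M.choose i : ℝ) * (t * (((M - i + c).factorial : ℝ) * (A ^ M * (A⁻¹) ^ i)))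
          = ((M.choose i : ℝ) * ((M - i + c).factorial : ℝ) * (i.factorial : ℝ))
            * (t * (A ^ M * (A⁻¹) ^ i) * ((i.factorial : ℝ))⁻¹) := by
            field_simp
        _ ≤ ((M + c).factorial : ℝ)
            * (t * (A ^ M * (A⁻¹) ^ i) * ((i.factorial : ℝ))⁻¹) := by
            refine mul_le_mul_of_nonneg_right hnatR ?_
            positivity
        _ = t * ((M + c).factorial : ℝ) * A ^ M * ((A⁻¹) ^ i * ((i.factorial : ℝ))⁻¹) := by
            ring
    refine le_trans (sum_le_sum hstep) ?_
    rw [← mul_sum]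
    have hsum : ∑ i ∈ range (M + 1), (A⁻¹) ^ i / (i.factorial : ℝ) ≤ Real.exp A⁻¹ :=
      Real.sum_le_exp_of_nonneg (by positivity) _
    calc (t * ((M + c).factorial : ℝ) * A ^ M)
          * ∑ i ∈ range (M + 1), (A⁻¹) ^ i / (i.factorial : ℝ)
        ≤ (t * ((M + c).factorial : ℝ) * A ^ M) * Real.exp A⁻¹ := by
          refine mul_le_mul_of_nonneg_left hsum ?_
          positivity
      _ = (((M + c).factorial : ℝ) * A ^ M) * (t * Real.exp A⁻¹) := by ring
      _ ≤ (((M + c).factorial : ℝ) * A ^ M) * A := by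
          refine mul_le_mul_of_nonneg_left hmain ?_
          positivity
      _ = ((m + c - 1).factorial : ℝ) * A ^ m := by
          have h3 : m + c - 1 = M + c := by omega
          rw [h3, hmM, pow_succ]
          ring

lemma numeric1 : (1 : ℝ) * Real.exp ((9/5 : ℝ))⁻¹ ≤ 9/5 := by
  rw [one_mul]
  have h : ((9/5 : ℝ))⁻¹ = 5/9 := by norm_num
  rw [h]
  refine le_of_pow_le_pow_left₀ (n := 9) (by norm_num) (by norm_num) ?_
  have hp : Real.exp ((5 : ℝ)/9) ^ (9 : ℕ) = Real.exp 5 := by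
    rw [← Real.exp_nat_mul]; norm_num
  have h5 : Real.exp (5 : ℝ) = Real.exp 1 ^ (5 : ℕ) := by
    rw [← Real.exp_nat_mul]; norm_num
  rw [hp, h5]
  calc Real.exp 1 ^ (5 : ℕ) ≤ (2.7182818286 : ℝ) ^ (5 : ℕ) :=
        pow_le_pow_left₀ (Real.exp_pos 1).le Real.exp_one_lt_d9.le 5
    _ ≤ (9/5 : ℝ) ^ (9 : ℕ) := by norm_num

lemma numeric2 : (9/5 : ℝ) * Real.exp ((Real.exp 1)⁻¹) ≤ Real.exp 1 := by
  have hinv : (Real.exp 1)⁻¹ ≤ 3/8 := by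
    rw [inv_le_comm₀ (Real.exp_pos 1) (by norm_num)]
    have := Real.exp_one_gt_d9
    norm_num at this ⊢
    linarith
  have hmono := Real.exp_le_exp.2 hinv
  have key : Real.exp ((3 : ℝ)/8) ≤ (5/9 : ℝ) * Real.exp 1 := by
    refine le_of_pow_le_pow_left₀ (n := 8) (by norm_num) (by positivity) ?_
    have h3 : Real.exp ((3 : ℝ)/8) ^ (8 : ℕ) = Real.exp 1 ^ (3 : ℕ) := by
      rw [← Real.exp_nat_mul, ← Real.exp_one_rpow]
      rw [Real.exp_one_rpow]
      rw [← Real.exp_nat_mul]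
      norm_num
    have h4 : ((9/5 : ℝ)) ^ (8 : ℕ) ≤ Real.exp 1 ^ (5 : ℕ) := by
      calc ((9/5 : ℝ)) ^ (8 : ℕ) ≤ (2.7182818283 : ℝ) ^ (5 : ℕ) := by norm_num
        _ ≤ Real.exp 1 ^ (5 : ℕ) :=
            pow_le_pow_left₀ (by norm_num) Real.exp_one_gt_d9.le 5
    have h5 : Real.exp 1 ^ (8 : ℕ) = Real.exp 1 ^ (3 : ℕ) * Real.exp 1 ^ (5 : ℕ) := by
      rw [← pow_add]
    rw [h3, mul_pow, h5]
    nlinarith [pow_pos (Real.exp_pos 1) 3, pow_pos (Real.exp_pos 1) 5]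
  calc (9/5 : ℝ) * Real.exp ((Real.exp 1)⁻¹) ≤ (9/5 : ℝ) * Real.exp ((3 : ℝ)/8) :=
        mul_le_mul_of_nonneg_left hmono (by norm_num)
    _ ≤ Real.exp 1 := by nlinarith [key]

end DPSaux

/-- The double sum over partitions `P` of `{0,…,n-1}` and partitions `P'` of the set
of blocks of `P` of `(|P'|-1)!` is bounded by `n! · e^(n+1)`. -/
theorem double_partition_sum_le
    (n : ℕ) (hn : 1 ≤ n) :
    (∑ P : Finpartition (Finset.range n),
       ∑ P' : Finpartition P.parts,
         ((P'.parts.card - 1).factorial : ℝ)) ≤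
      (n.factorial : ℝ) * Real.exp (n + 1) := by
  have h95 : (1 : ℝ) ≤ 9/5 := by norm_num
  have hexp1 : (1 : ℝ) ≤ Real.exp 1 := by
    have := Real.exp_one_gt_d9
    norm_num at this
    linarith
  have step1 : (∑ P : Finpartition (Finset.range n),
       ∑ P' : Finpartition P.parts, ((P'.parts.card - 1).factorial : ℝ))
      ≤ ∑ P : Finpartition (Finset.range n),
          ((P.parts.card + 0 - 1).factorial : ℝ) * (9/5 : ℝ) ^ P.parts.card := by
    refine sum_le_sum fun P _ => ?_
    have := DPSaux.key_bound 1 (9/5) zero_le_one h95 DPSaux.numeric1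
      P.parts.card P.parts rfl 0
    simpa using this
  have step2 := DPSaux.key_bound (9/5) (Real.exp 1) (by norm_num) hexp1 DPSaux.numeric2
    n (Finset.range n) (Finset.card_range n) 0
  refine le_trans (le_trans step1 step2) ?_
  have hpow : Real.exp 1 ^ n = Real.exp (n : ℝ) := Real.exp_one_pow n
  rw [hpow]
  have hf : ((n + 0 - 1).factorial : ℝ) ≤ (n.factorial : ℝ) := by
    exact_mod_cast Nat.factorial_le (by omega)
  have he : Real.exp (n : ℝ) ≤ Real.exp ((n : ℝ) + 1) := Real.exp_le_exp.2 (by linarith)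
  exact mul_le_mul hf he (Real.exp_pos _).le (by positivity)
end

section
/- Let (S_B(t))_{t ∈ ℝ}, indexed by nonempty finite subsets B of a countable label set, be families of pairwise commuting invertible elements of a commutative monoid satisfying the group property S_B(t₁)S_B(t₂) = S_B(t₁+t₂) and S_B(0) = 1. Define, for a finite set Y and a sequence of initial data (g_B(0)) indexed by nonempty subsets, the evolved family g_Y(t) := Σ_{P partition of Y} A_{|P|}(t, blocks of P) ∏_{B∈P} g_B(0), where A_{|P|}(t, {X_1,…,X_k}) = Σ_{P' partition of {X_1,…,X_k}} (-1)^{|P'|-1}(|P'|-1)! ∏_{Z∈P'} S_{∪Z}(t). Then the solution operator satisfies the group property: applying the expansion with time t₂ to the data, then with time t₁, agrees with one application at time t₁+t₂; i.e. (A_{t₁}(A_{t₂}(g(0))))_Y = (A_{t₁+t₂}(g(0)))_Y for every finite Y. -/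
open Finset

section AuxPart

variable {β : Type*} [DecidableEq β] {R : Type*} [CommRing R]

namespace LiouAux

/-- A cell of `ρ` contained in the union of a subset `b` of cells belongs to `b`. -/
lemma mem_of_subset_sup {Y : Finset β} (ρ : Finpartition Y) {b : Finset (Finset β)}
    (hb : b ⊆ ρ.parts) {C : Finset β} (hC : C ∈ ρ.parts) (hCs : C ⊆ b.sup id) : C ∈ b := by
  obtain ⟨x, hx⟩ := ρ.nonempty_of_mem_parts hC
  have hx' : x ∈ b.sup id := hCs hx
  rw [Finset.mem_sup] at hx'
  obtain ⟨C', hC', hxC'⟩ := hx'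
  have : C = C' := ρ.eq_of_mem_parts hC (hb hC') hx hxC'
  rwa [this]

lemma filter_sup_eq {Y : Finset β} (ρ : Finpartition Y) {b : Finset (Finset β)}
    (hb : b ⊆ ρ.parts) : ρ.parts.filter (· ⊆ b.sup id) = b := by
  ext C
  simp only [mem_filter]
  constructor
  · rintro ⟨hC, hCs⟩
    exact mem_of_subset_sup ρ hb hC hCs
  · intro hCb
    exact ⟨hb hCb, Finset.le_sup (f := id) hCb⟩

/-- Merge the cells of `ρ` along a partition `π` of the set of cells. -/
def glue {Y : Finset β} (ρ : Finpartition Y) (π : Finpartition ρ.parts) : Finpartition Y where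
  parts := π.parts.image (fun b => b.sup id)
  supIndep := by
    rw [Finset.supIndep_iff_pairwiseDisjoint]
    intro B₁ hB₁ B₂ hB₂ hne
    rw [Finset.mem_coe, Finset.mem_image] at hB₁ hB₂
    obtain ⟨b₁, hb₁, rfl⟩ := hB₁
    obtain ⟨b₂, hb₂, rfl⟩ := hB₂
    have hbne : b₁ ≠ b₂ := by rintro rfl; exact hne rfl
    have hdisj : Disjoint b₁ b₂ := π.disjoint hb₁ hb₂ hbne
    show Disjoint (b₁.sup id) (b₂.sup id)
    rw [Finset.disjoint_left]
    intro x hx₁ hx₂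
    rw [Finset.mem_sup] at hx₁ hx₂
    obtain ⟨C₁, hC₁, hxC₁⟩ := hx₁
    obtain ⟨C₂, hC₂, hxC₂⟩ := hx₂
    have h12 : C₁ = C₂ := ρ.eq_of_mem_parts (π.le hb₁ hC₁) (π.le hb₂ hC₂) hxC₁ hxC₂
    exact Finset.disjoint_left.mp hdisj hC₁ (h12 ▸ hC₂)
  sup_parts := by
    rw [Finset.sup_image]
    have h : π.parts.sup (id ∘ fun b => b.sup id) = (π.parts.biUnion id).sup id := by
      rw [Finset.sup_biUnion]; rfl
    rw [h, π.biUnion_parts, ρ.sup_parts]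
  bot_notMem := by
    intro h
    rw [Finset.mem_image] at h
    obtain ⟨b, hb, hsup⟩ := h
    obtain ⟨C, hC⟩ := π.nonempty_of_mem_parts hb
    exact ρ.ne_bot (π.le hb hC) (le_bot_iff.mp (hsup ▸ Finset.le_sup (f := id) hC))

lemma glue_parts {Y : Finset β} (ρ : Finpartition Y) (π : Finpartition ρ.parts) :
    (glue ρ π).parts = π.parts.image (fun b => b.sup id) := rfl

lemma glue_filter_sup {Y : Finset β} (ρ : Finpartition Y) (π : Finpartition ρ.parts)
    {B : Finset β} (hB : B ∈ (glue ρ π).parts) :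
    (ρ.parts.filter (· ⊆ B)).sup id = B := by
  rw [glue_parts, Finset.mem_image] at hB
  obtain ⟨b, hb, rfl⟩ := hB
  rw [filter_sup_eq ρ (π.le hb)]

/-- Group the cells of `ρ` according to the coarser partition `P`. -/
def grouping {Y : Finset β} (ρ P : Finpartition Y)
    (hfit : ∀ B ∈ P.parts, (ρ.parts.filter (· ⊆ B)).sup id = B) : Finpartition ρ.parts where
  parts := P.parts.image (fun B => ρ.parts.filter (· ⊆ B))
  supIndep := by
    rw [Finset.supIndep_iff_pairwiseDisjoint]
    intro b₁ hb₁ b₂ hb₂ hne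
    rw [Finset.mem_coe, Finset.mem_image] at hb₁ hb₂
    obtain ⟨B₁, hB₁, rfl⟩ := hb₁
    obtain ⟨B₂, hB₂, rfl⟩ := hb₂
    have hBne : B₁ ≠ B₂ := by rintro rfl; exact hne rfl
    have hd : Disjoint B₁ B₂ := P.disjoint hB₁ hB₂ hBne
    show Disjoint (ρ.parts.filter (· ⊆ B₁)) (ρ.parts.filter (· ⊆ B₂))
    rw [Finset.disjoint_left]
    intro C hC₁ hC₂
    rw [Finset.mem_filter] at hC₁ hC₂
    exact ρ.ne_bot hC₁.1
      (disjoint_self.mp (hd.mono (Finset.le_iff_subset.mpr hC₁.2) (Finset.le_iff_subset.mpr hC₂.2)))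
  sup_parts := by
    apply le_antisymm
    · apply Finset.sup_le
      intro b hb
      rw [Finset.mem_image] at hb
      obtain ⟨B, hB, rfl⟩ := hb
      exact Finset.le_iff_subset.mpr (Finset.filter_subset _ _)
    · intro C hC
      obtain ⟨x, hx⟩ := ρ.nonempty_of_mem_parts hC
      have hxY : x ∈ Y := Finset.le_iff_subset.mp (ρ.le hC) hx
      obtain ⟨B, hB, hxB⟩ := P.exists_mem hxY
      have hCB : C ⊆ B := by
        have hxB' : x ∈ (ρ.parts.filter (· ⊆ B)).sup id := (hfit B hB).symm ▸ hxB
        rw [Finset.mem_sup] at hxB'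
        obtain ⟨C', hC', hxC'⟩ := hxB'
        rw [Finset.mem_filter] at hC'
        have : C = C' := ρ.eq_of_mem_parts hC hC'.1 hx hxC'
        exact this ▸ hC'.2
      have hmem : ρ.parts.filter (· ⊆ B) ∈ P.parts.image (fun B => ρ.parts.filter (· ⊆ B)) :=
        Finset.mem_image_of_mem _ hB
      have hCf : C ∈ ρ.parts.filter (· ⊆ B) := Finset.mem_filter.mpr ⟨hC, hCB⟩
      exact Finset.le_iff_subset.mp (Finset.le_sup (f := id) hmem) hCf
  bot_notMem := by
    intro h
    rw [Finset.mem_image] at h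
    obtain ⟨B, hB, hf⟩ := h
    apply P.ne_bot hB
    rw [← hfit B hB, hf]
    simp

lemma grouping_parts {Y : Finset β} (ρ P : Finpartition Y)
    (hfit : ∀ B ∈ P.parts, (ρ.parts.filter (· ⊆ B)).sup id = B) :
    (grouping ρ P hfit).parts = P.parts.image (fun B => ρ.parts.filter (· ⊆ B)) := rfl

lemma bind_parts_filter {Y : Finset β} (P : Finpartition Y) (q : ∀ B ∈ P.parts, Finpartition B)
    {B : Finset β} (hB : B ∈ P.parts) : (P.bind q).parts.filter (· ⊆ B) = (q B hB).parts := by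
  ext C
  simp only [mem_filter, Finpartition.mem_bind]
  constructor
  · rintro ⟨⟨A, hA, hCA⟩, hCB⟩
    obtain ⟨x, hx⟩ := (q A hA).nonempty_of_mem_parts hCA
    have hAB : A = B :=
      P.eq_of_mem_parts hA hB (Finset.le_iff_subset.mp ((q A hA).le hCA) hx) (hCB hx)
    subst hAB
    exact hCA
  · intro hC
    exact ⟨⟨B, hB, hC⟩, Finset.le_iff_subset.mp ((q B hB).le hC)⟩

lemma hfit_bind {Y : Finset β} (P : Finpartition Y) (q : ∀ B ∈ P.parts, Finpartition B) :
    ∀ B ∈ P.parts, ((P.bind q).parts.filter (· ⊆ B)).sup id = B := by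
  intro B hB
  rw [bind_parts_filter P q hB]
  exact (q B hB).sup_parts

lemma qparts_disjoint {Y : Finset β} (P : Finpartition Y) (q : ∀ B ∈ P.parts, Finpartition B) :
    ∀ x ∈ P.parts.attach, ∀ y ∈ P.parts.attach, x ≠ y →
      Disjoint ((q x.1 x.2).parts) ((q y.1 y.2).parts) := by
  rintro ⟨A, hA⟩ - ⟨B, hB⟩ - hne
  have hAB : A ≠ B := by rintro rfl; exact hne rfl
  rw [Finset.disjoint_left]
  intro C hCA hCB
  have h1 : C ≤ A := (q A hA).le hCA
  have h2 : C ≤ B := (q B hB).le hCB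
  exact (q A hA).ne_bot hCA
    (disjoint_self.mp ((P.disjoint hA hB hAB).mono h1 h2))

/-- Extensionality for sigma pairs of a partition and a partition of its cells. -/
lemma sigma_fp_ext {γ : Type*} [DecidableEq γ] {ι : Type*} {g : ι → Finset γ}
    {x y : Σ i : ι, Finpartition (g i)} (h1 : x.1 = y.1) (h2 : x.2.parts = y.2.parts) :
    x = y := by
  obtain ⟨i, p⟩ := x
  obtain ⟨j, qq⟩ := y
  dsimp at h1
  subst h1
  exact congrArg (Sigma.mk i) (Finpartition.ext h2)

lemma sigma_pi_ext {Y : Finset β}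
    {x y : Σ P : Finpartition Y, ∀ B ∈ P.parts, Finpartition B} (h1 : x.1 = y.1)
    (h2 : ∀ B (hBx : B ∈ x.1.parts) (hBy : B ∈ y.1.parts), (x.2 B hBx).parts = (y.2 B hBy).parts) :
    x = y := by
  obtain ⟨P, q⟩ := x
  obtain ⟨P', q'⟩ := y
  dsimp at h1
  subst h1
  refine congrArg (Sigma.mk P) ?_
  funext B hB
  exact Finpartition.ext (h2 B hB hB)

/-- The master reindexing lemma: composing partition expansions. -/
lemma master (Y : Finset β) (F : Finset (Finset β) → R) (G : Finset β → R) :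
    ∑ P : Finpartition Y, ∏ B ∈ P.parts, (∑ Q : Finpartition B, F Q.parts * ∏ C ∈ Q.parts, G C)
      = ∑ ρ : Finpartition Y,
          (∑ π : Finpartition ρ.parts, ∏ b ∈ π.parts, F b) * ∏ C ∈ ρ.parts, G C := by
  classical
  have h1 : ∀ P : Finpartition Y,
      ∏ B ∈ P.parts, (∑ Q : Finpartition B, F Q.parts * ∏ C ∈ Q.parts, G C)
        = ∑ q ∈ P.parts.pi (fun B => (univ : Finset (Finpartition B))),
            ∏ B ∈ P.parts.attach, (F (q B.1 B.2).parts * ∏ C ∈ (q B.1 B.2).parts, G C) :=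
    fun P => Finset.prod_sum _ _ _
  have h2 : ∀ ρ : Finpartition Y,
      (∑ π : Finpartition ρ.parts, ∏ b ∈ π.parts, F b) * ∏ C ∈ ρ.parts, G C
        = ∑ π ∈ (univ : Finset (Finpartition ρ.parts)),
            (∏ b ∈ π.parts, F b) * ∏ C ∈ ρ.parts, G C :=
    fun ρ => Finset.sum_mul _ _ _
  simp_rw [h1, h2]
  rw [Finset.sum_sigma', Finset.sum_sigma']
  refine Finset.sum_bij'
    (fun x _ => (⟨x.1.bind x.2, grouping (x.1.bind x.2) x.1 (hfit_bind x.1 x.2)⟩ :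
      Σ ρ : Finpartition Y, Finpartition ρ.parts))
    (fun y _ => (⟨glue y.1 y.2, fun B hB => y.1.ofSubset (Finset.filter_subset _ _)
      (glue_filter_sup y.1 y.2 hB)⟩ : Σ P : Finpartition Y, ∀ B ∈ P.parts, Finpartition B))
    ?_ ?_ ?_ ?_ ?_
  · intro x _
    simp only [Finset.mem_sigma, Finset.mem_univ, and_self]
  · intro y _
    simp only [Finset.mem_sigma, Finset.mem_univ, true_and]
    rw [Finset.mem_pi]
    intro B hB
    exact Finset.mem_univ _
  · -- left inverse
    rintro ⟨P, q⟩ _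
    apply sigma_pi_ext
    · -- glue (bind) (grouping) = P
      apply Finpartition.ext
      rw [glue_parts, grouping_parts, Finset.image_image]
      calc P.parts.image ((fun b => b.sup id) ∘ fun B => (P.bind q).parts.filter (· ⊆ B))
          = P.parts.image id := Finset.image_congr (fun B hB => hfit_bind P q B hB)
        _ = P.parts := Finset.image_id
    · intro B hBx hBy
      dsimp only
      rw [Finpartition.ofSubset_parts]
      exact bind_parts_filter P q hBy
  · -- right inverse
    rintro ⟨ρ, π⟩ _
    have hbind : (glue ρ π).bind
        (fun B hB => ρ.ofSubset (Finset.filter_subset _ _) (glue_filter_sup ρ π hB)) = ρ := by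
      apply Finpartition.ext
      ext C
      rw [Finpartition.mem_bind]
      constructor
      · rintro ⟨A, hA, hC⟩
        rw [Finpartition.ofSubset_parts, Finset.mem_filter] at hC
        exact hC.1
      · intro hC
        obtain ⟨b, hb, hCb⟩ := π.exists_mem hC
        refine ⟨b.sup id, Finset.mem_image_of_mem _ hb, ?_⟩
        rw [Finpartition.ofSubset_parts, Finset.mem_filter]
        exact ⟨hC, Finset.le_sup (f := id) hCb⟩
    apply sigma_fp_ext (g := fun ρ : Finpartition Y => ρ.parts)
    · exact hbind
    · dsimp only
      rw [grouping_parts]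
      have hparts : ((glue ρ π).bind
          (fun B hB => ρ.ofSubset (Finset.filter_subset _ _) (glue_filter_sup ρ π hB))).parts
          = ρ.parts := congrArg Finpartition.parts hbind
      rw [hparts, glue_parts, Finset.image_image]
      calc π.parts.image ((fun B => ρ.parts.filter (· ⊆ B)) ∘ fun b => b.sup id)
          = π.parts.image id := Finset.image_congr (fun b hb => filter_sup_eq ρ (π.le hb))
        _ = π.parts := Finset.image_id
  · -- summand equality
    rintro ⟨P, q⟩ _
    dsimp only
    rw [Finset.prod_mul_distrib]
    congr 1
    · -- products of F
      rw [grouping_parts, Finset.prod_image]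
      · rw [← Finset.prod_attach P.parts
          (fun B => F ((P.bind q).parts.filter (· ⊆ B)))]
        exact Finset.prod_congr rfl
          (fun B _ => (congrArg F (bind_parts_filter P q B.2)).symm)
      · intro B₁ hB₁ B₂ hB₂ heq
        beta_reduce at heq
        rw [← hfit_bind P q B₁ hB₁, ← hfit_bind P q B₂ hB₂, heq]
    · -- products of G
      rw [Finpartition.bind_parts, Finset.prod_biUnion (qparts_disjoint P q)]

/-- The Möbius coefficient of the partition lattice. -/
def muK (R : Type*) [CommRing R] (k : ℕ) : R := (-1 : R) ^ (k - 1) * ((k - 1).factorial : R)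

lemma sum_partitions_empty {γ : Type*} [DecidableEq γ] (f : Finset (Finset γ) → R) :
    ∑ π : Finpartition (∅ : Finset γ), f π.parts = f ∅ := by
  have hcard : Fintype.card (Finpartition (∅ : Finset γ)) = 1 := by
    rw [Fintype.card_eq_one_iff]
    refine ⟨(⊥ : Finpartition (∅ : Finset γ)), fun π => Finpartition.ext ?_⟩
    rw [Finpartition.parts_eq_empty_iff.mpr Finset.bot_eq_empty.symm,
      Finpartition.parts_eq_empty_iff.mpr Finset.bot_eq_empty.symm]
  have h : ∀ π : Finpartition (∅ : Finset γ), f π.parts = f ∅ := fun π =>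
    congrArg f (Finpartition.parts_eq_empty_iff.mpr Finset.bot_eq_empty.symm)
  calc ∑ π : Finpartition (∅ : Finset γ), f π.parts
      = ∑ _π : Finpartition (∅ : Finset γ), f ∅ := Fintype.sum_congr _ _ h
    _ = Fintype.card (Finpartition (∅ : Finset γ)) • f ∅ := by
        rw [Finset.sum_const, Finset.card_univ]
    _ = f ∅ := by rw [hcard, one_smul]

lemma parts_of_singleton {γ : Type*} [DecidableEq γ] (x : γ)
    (π : Finpartition ({x} : Finset γ)) : π.parts = {({x} : Finset γ)} := by
  have hsub : ∀ b ∈ π.parts, b = {x} := by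
    intro b hb
    rcases Finset.subset_singleton_iff.mp (Finset.le_iff_subset.mp (π.le hb)) with h | h
    · exact absurd h (by simpa [Finset.bot_eq_empty] using π.ne_bot hb)
    · exact h
  obtain ⟨b, hb⟩ := π.parts_nonempty (by simp [Finset.bot_eq_empty])
  rw [Finset.eq_singleton_iff_unique_mem]
  exact ⟨hsub b hb ▸ hb, hsub⟩

lemma sum_partitions_singleton {γ : Type*} [DecidableEq γ] (x : γ)
    (f : Finset (Finset γ) → R) :
    ∑ π : Finpartition ({x} : Finset γ), f π.parts = f {({x} : Finset γ)} := by
  have hne : ({x} : Finset γ) ≠ ⊥ := by simp [Finset.bot_eq_empty]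
  have hcard : Fintype.card (Finpartition ({x} : Finset γ)) = 1 := by
    rw [Fintype.card_eq_one_iff]
    exact ⟨Finpartition.indiscrete hne, fun π => Finpartition.ext
      (by rw [parts_of_singleton x π, Finpartition.indiscrete_parts])⟩
  have h : ∀ π : Finpartition ({x} : Finset γ), f π.parts = f {({x} : Finset γ)} := fun π =>
    congrArg f (parts_of_singleton x π)
  calc ∑ π : Finpartition ({x} : Finset γ), f π.parts
      = ∑ _π : Finpartition ({x} : Finset γ), f {({x} : Finset γ)} := Fintype.sum_congr _ _ h
    _ = Fintype.card (Finpartition ({x} : Finset γ)) • f {({x} : Finset γ)} := by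
        rw [Finset.sum_const, Finset.card_univ]
    _ = f {({x} : Finset γ)} := by rw [hcard, one_smul]

lemma avoid_parts_of_mem {γ : Type*} [DecidableEq γ] {s : Finset γ} (π : Finpartition s)
    {A : Finset γ} (hA : A ∈ π.parts) : (π.avoid A).parts = π.parts.erase A := by
  ext b
  rw [Finpartition.mem_avoid, Finset.mem_erase]
  constructor
  · rintro ⟨d, hd, hdA, rfl⟩
    have hne : d ≠ A := fun h => hdA (h ▸ le_rfl)
    have hdj : Disjoint d A := π.disjoint hd hA hne
    rw [Finset.sdiff_eq_self_iff_disjoint.mpr hdj]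
    exact ⟨hne, hd⟩
  · rintro ⟨hne, hb⟩
    have hdj : Disjoint b A := π.disjoint hb hA hne
    refine ⟨b, hb, fun hle => π.ne_bot hb (hdj.eq_bot_of_le hle), ?_⟩
    exact Finset.sdiff_eq_self_iff_disjoint.mpr hdj

lemma eq_indiscrete_of_top_mem {γ : Type*} [DecidableEq γ] {Y : Finset γ} (hY : Y ≠ ⊥)
    (P : Finpartition Y) (h : Y ∈ P.parts) : P = Finpartition.indiscrete hY := by
  apply Finpartition.ext
  rw [Finpartition.indiscrete_parts, Finset.eq_singleton_iff_unique_mem]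
  refine ⟨h, fun b hb => ?_⟩
  by_contra hbY
  exact P.ne_bot hb ((P.disjoint hb h hbY).eq_bot_of_le (P.le hb))

lemma Ksum_eq_zero {γ : Type*} [DecidableEq γ] :
    ∀ (n : ℕ) (s : Finset γ), s.card = n → 2 ≤ n →
      ∑ π : Finpartition s, ∏ b ∈ π.parts, (muK R b.card) = 0 := by
  intro n
  induction n using Nat.strong_induction_on with
  | _ n IH =>
  intro s hcard hn
  have hs : s.Nonempty := by rw [← Finset.card_pos, hcard]; omega
  obtain ⟨a, ha⟩ := hs
  set E := s.erase a with hE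
  have hEcard : E.card = n - 1 := by rw [hE, Finset.card_erase_of_mem ha, hcard]
  have haE : a ∉ E := Finset.notMem_erase a s
  -- auxiliary facts for the bijection
  have hsetEq : ∀ π : Finpartition s, s \ (π.part a) = E \ ((π.part a).erase a) := by
    intro π
    have haA : a ∈ π.part a := π.mem_part ha
    ext x
    simp only [Finset.mem_sdiff, hE, Finset.mem_erase]
    constructor
    · rintro ⟨hxs, hxA⟩
      exact ⟨⟨fun hxa => hxA (hxa ▸ haA), hxs⟩, fun hc => hxA hc.2⟩
    · rintro ⟨⟨hxa, hxs⟩, hxA⟩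
      exact ⟨hxs, fun hc => hxA ⟨hxa, hc⟩⟩
  have hins_ne : ∀ T : Finset γ, (insert a T : Finset γ) ≠ ⊥ := fun T => by
    simp [Finset.bot_eq_empty]
  have hdisjTE : ∀ T ∈ E.powerset, Disjoint (E \ T) (insert a T) := by
    intro T hT
    rw [Finset.disjoint_left]
    intro x hx hx'
    rw [Finset.mem_sdiff, hE, Finset.mem_erase] at hx
    rcases Finset.mem_insert.mp hx' with rfl | hxT
    · exact hx.1.1 rfl
    · exact hx.2 hxT
  have hsupTE : ∀ T ∈ E.powerset, (E \ T) ⊔ (insert a T) = s := by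
    intro T hT
    rw [Finset.sup_eq_union, Finset.union_insert,
      Finset.sdiff_union_of_subset (Finset.mem_powerset.mp hT), hE, Finset.insert_erase ha]
  have hstep : ∑ π : Finpartition s, ∏ b ∈ π.parts, (muK R b.card)
      = ∑ T ∈ E.powerset, muK R (T.card + 1) *
          ∑ π' : Finpartition (E \ T), ∏ b ∈ π'.parts, (muK R b.card) := by
    have hmul : ∀ T ∈ E.powerset,
        muK R (T.card + 1) * ∑ π' : Finpartition (E \ T), ∏ b ∈ π'.parts, (muK R b.card)
          = ∑ π' : Finpartition (E \ T), muK R (T.card + 1) * ∏ b ∈ π'.parts, (muK R b.card) :=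
      fun T _ => Finset.mul_sum _ _ _
    rw [Finset.sum_congr rfl hmul, Finset.sum_sigma']
    refine Finset.sum_bij'
      (fun π _ => (⟨(π.part a).erase a, (π.avoid (π.part a)).copy (hsetEq π)⟩ :
        Σ T : Finset γ, Finpartition (E \ T)))
      (fun x hx => x.2.extend (hins_ne x.1) (hdisjTE x.1 (Finset.mem_sigma.mp hx).1)
        (hsupTE x.1 (Finset.mem_sigma.mp hx).1))
      ?_ ?_ ?_ ?_ ?_
    · intro π _
      rw [Finset.mem_sigma]
      refine ⟨Finset.mem_powerset.mpr ?_, Finset.mem_univ _⟩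
      exact Finset.erase_subset_erase a (Finset.le_iff_subset.mp (π.le (π.part_mem.2 ha)))
    · intro x _
      exact Finset.mem_univ _
    · -- left inverse
      intro π _
      apply Finpartition.ext
      rw [Finpartition.extend_parts, Finpartition.copy_parts,
        avoid_parts_of_mem π (π.part_mem.2 ha), Finset.insert_erase (π.mem_part ha),
        Finset.insert_erase (π.part_mem.2 ha)]
    · -- right inverse
      rintro ⟨T, π'⟩ hx
      have hT : T ⊆ E := Finset.mem_powerset.mp (Finset.mem_sigma.mp hx).1
      have haT : a ∉ T := fun h => haE (hT h)
      set J := π'.extend (hins_ne T) (hdisjTE T (Finset.mem_sigma.mp hx).1)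
        (hsupTE T (Finset.mem_sigma.mp hx).1) with hJ
      have hmemJ : insert a T ∈ J.parts := by
        rw [hJ, Finpartition.extend_parts]
        exact Finset.mem_insert_self _ _
      have hpart : J.part a = insert a T :=
        J.part_eq_of_mem hmemJ (Finset.mem_insert_self a T)
      have hnotmem : insert a T ∉ π'.parts := by
        intro hmem
        have : a ∈ E \ T := Finset.le_iff_subset.mp (π'.le hmem) (Finset.mem_insert_self a T)
        exact haE (Finset.mem_sdiff.mp this).1
      apply sigma_fp_ext (g := fun T : Finset γ => E \ T)
      · show (J.part a).erase a = T
        rw [hpart, Finset.erase_insert haT]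
      · show ((J.avoid (J.part a)).copy (hsetEq J)).parts = π'.parts
        rw [Finpartition.copy_parts, avoid_parts_of_mem J (J.part_mem.2 ha), hpart, hJ,
          Finpartition.extend_parts, Finset.erase_insert hnotmem]
    · -- summand
      intro π _
      dsimp only
      rw [Finpartition.copy_parts, avoid_parts_of_mem π (π.part_mem.2 ha)]
      have hc : ((π.part a).erase a).card + 1 = (π.part a).card :=
        Finset.card_erase_add_one (π.mem_part ha)
      rw [hc]
      exact (Finset.mul_prod_erase _ _ (π.part_mem.2 ha)).symm
  rw [hstep]
  have hinner : ∀ T ∈ E.powerset,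
      (∑ π' : Finpartition (E \ T), ∏ b ∈ π'.parts, (muK R b.card))
        = if (E \ T).card ≤ 1 then 1 else 0 := by
    intro T hT
    rcases Nat.lt_or_ge (E \ T).card 2 with h2 | h2
    · have h01 : (E \ T).card = 0 ∨ (E \ T).card = 1 := by omega
      rcases h01 with h0 | h1
      · rw [if_pos (by omega)]
        rw [Finset.card_eq_zero] at h0
        rw [h0]
        rw [sum_partitions_empty (f := fun p => ∏ b ∈ p, muK R b.card)]
        exact Finset.prod_empty
      · rw [if_pos (by omega)]
        obtain ⟨x, hx⟩ := Finset.card_eq_one.mp h1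
        rw [hx, sum_partitions_singleton (f := fun p => ∏ b ∈ p, muK R b.card)]
        simp [muK]
    · rw [if_neg (by omega)]
      have hlt : (E \ T).card < n := by
        have := Finset.card_le_card (Finset.sdiff_subset (s := E) (t := T))
        omega
      exact IH _ hlt _ rfl h2
  rw [Finset.sum_congr rfl (fun T hT => by rw [hinner T hT])]
  set m := E.card with hm
  have hm1 : 1 ≤ m := by omega
  have hphi : ∀ T ∈ E.powerset,
      muK R (T.card + 1) * (if (E \ T).card ≤ 1 then (1 : R) else 0)
        = (if T = E then muK R (m + 1) else 0) + (if T.card = m - 1 then muK R m else 0) := by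
    intro T hT
    have hTE := Finset.mem_powerset.mp hT
    have hTc : T.card ≤ m := Finset.card_le_card hTE
    rw [Finset.card_sdiff_of_subset hTE]
    by_cases h1 : T.card = m
    · have hTeq : T = E := Finset.eq_of_subset_of_card_le hTE (by omega)
      rw [if_pos (by omega), if_pos hTeq, if_neg (by omega), h1, mul_one, add_zero]
    · by_cases h2 : T.card = m - 1
      · have hTne : T ≠ E := fun h => h1 (by rw [h])
        have hcc : T.card + 1 = m := by omega
        rw [if_pos (by omega), if_neg hTne, if_pos h2, mul_one, zero_add, hcc]
      · have hTne : T ≠ E := fun h => h1 (by rw [h])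
        rw [if_neg (by omega), mul_zero, if_neg hTne, if_neg h2, add_zero]
  rw [Finset.sum_congr rfl hphi, Finset.sum_add_distrib, Finset.sum_ite_eq' E.powerset E
    (fun _ => muK R (m + 1)), if_pos (Finset.mem_powerset_self E), ← Finset.sum_filter,
    ← Finset.powersetCard_eq_filter, Finset.sum_const, Finset.card_powersetCard]
  have hchoose : m.choose (m - 1) = m := by
    have := Nat.choose_symm (n := m) (k := 1) hm1
    simpa [Nat.choose_one_right] using this
  rw [hchoose]
  obtain ⟨k, hk⟩ : ∃ k, m = k + 1 := ⟨m - 1, by omega⟩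
  rw [hk]
  simp only [muK, Nat.add_sub_cancel, nsmul_eq_mul]
  rw [pow_succ, Nat.factorial_succ]
  push_cast
  ring

end LiouAux

end AuxPart

variable {α : Type*} [DecidableEq α] {R : Type*} [CommRing R]

/-- The cumulant of order `|blocks|` of the evolution operators `S` at time `t`:
`A(t, {X_1,…,X_k}) = ∑_{P' partition of {X_1,…,X_k}} (-1)^(|P'|-1)(|P'|-1)! ∏_{Z∈P'} S_{∪Z}(t)`. -/
noncomputable def cumulant (S : Finset α → ℝ → R) (t : ℝ)
    (blocks : Finset (Finset α)) : R :=
  ∑ P' : Finpartition blocks,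
    (-1 : R) ^ (P'.parts.card - 1) * ((P'.parts.card - 1).factorial : R) *
      ∏ Z ∈ P'.parts, S (Z.sup id) t

/-- The solution expansion of the nonlinear Liouville hierarchy:
`g_Y(t) = ∑_{P partition of Y} A_{|P|}(t, blocks of P) ∏_{B ∈ P} g_B(0)`. -/
noncomputable def evolve (S : Finset α → ℝ → R) (t : ℝ)
    (g : Finset α → R) (Y : Finset α) : R :=
  ∑ P : Finpartition Y, cumulant S t P.parts * ∏ B ∈ P.parts, g B

lemma cumulant_empty (S : Finset α → ℝ → R) (t : ℝ) :
    cumulant S t (∅ : Finset (Finset α)) = 1 := by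
  have h := LiouAux.sum_partitions_empty (γ := Finset α) (R := R)
    (f := fun p : Finset (Finset (Finset α)) =>
      (-1 : R) ^ (p.card - 1) * ((p.card - 1).factorial : R) * ∏ Z ∈ p, S (Z.sup id) t)
  have h2 : cumulant S t (∅ : Finset (Finset α))
      = (-1 : R) ^ ((∅ : Finset (Finset (Finset α))).card - 1) *
        (((∅ : Finset (Finset (Finset α))).card - 1).factorial : R) *
        ∏ Z ∈ (∅ : Finset (Finset (Finset α))), S (Z.sup id) t := h
  rw [h2]
  simp

lemma evolve_empty (S : Finset α → ℝ → R) (t : ℝ) (g : Finset α → R) :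
    evolve S t g (∅ : Finset α) = 1 := by
  have h := LiouAux.sum_partitions_empty (γ := α) (R := R)
    (f := fun p : Finset (Finset α) => cumulant S t p * ∏ B ∈ p, g B)
  have h2 : evolve S t g (∅ : Finset α)
      = cumulant S t (∅ : Finset (Finset α)) * ∏ B ∈ (∅ : Finset (Finset α)), g B := h
  rw [h2, cumulant_empty]
  simp

lemma step1 (S : Finset α → ℝ → R) (t : ℝ) (W : Finset (Finset α)) (hW : W.Nonempty) :
    ∑ π : Finpartition W, ∏ b ∈ π.parts, cumulant S t b = S (W.sup id) t := by
  classical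
  have hWb : W ≠ ⊥ := by simpa [Finset.bot_eq_empty] using hW.ne_empty
  have hL : ∑ π : Finpartition W, ∏ b ∈ π.parts, cumulant S t b
      = ∑ ρ : Finpartition W,
          (∑ π : Finpartition ρ.parts, ∏ b ∈ π.parts, LiouAux.muK R b.card) *
            ∏ C ∈ ρ.parts, S (C.sup id) t :=
    LiouAux.master (R := R) W
      (fun e : Finset (Finset (Finset α)) => LiouAux.muK R e.card)
      (fun C : Finset (Finset α) => S (C.sup id) t)
  rw [hL]
  have hzero : ∀ ρ : Finpartition W, ρ ≠ Finpartition.indiscrete hWb →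
      (∑ π : Finpartition ρ.parts, ∏ b ∈ π.parts, LiouAux.muK R b.card) *
        ∏ C ∈ ρ.parts, S (C.sup id) t = 0 := by
    intro ρ hρ
    have hcard2 : 2 ≤ ρ.parts.card := by
      rcases Nat.lt_or_ge ρ.parts.card 2 with h | h
      · exfalso
        have h01 : ρ.parts.card = 0 ∨ ρ.parts.card = 1 := by omega
        rcases h01 with h0 | h1
        · rw [Finset.card_eq_zero] at h0
          exact hWb (Finpartition.parts_eq_empty_iff.mp h0)
        · obtain ⟨b, hb⟩ := Finset.card_eq_one.mp h1
          have hbW : b = W := by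
            have hsp := ρ.sup_parts
            rw [hb, Finset.sup_singleton] at hsp
            exact hsp
          refine hρ (LiouAux.eq_indiscrete_of_top_mem hWb ρ ?_)
          rw [hb, hbW]
          exact Finset.mem_singleton_self _
      · exact h
    rw [LiouAux.Ksum_eq_zero ρ.parts.card ρ.parts rfl hcard2, zero_mul]
  rw [Fintype.sum_eq_single _ hzero, Finpartition.indiscrete_parts,
    LiouAux.sum_partitions_singleton (x := W)
      (f := fun p : Finset (Finset (Finset (Finset α))) => ∏ b ∈ p, LiouAux.muK R b.card),
    Finset.prod_singleton, Finset.prod_singleton]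
  simp [LiouAux.muK]

lemma key_step (S : Finset α → ℝ → R) (t : ℝ) (g : Finset α → R) (Y : Finset α)
    (hY : Y.Nonempty) :
    ∑ P : Finpartition Y, ∏ B ∈ P.parts, evolve S t g B
      = S Y t * ∑ P : Finpartition Y, ∏ B ∈ P.parts, g B := by
  have hYb : Y ≠ ⊥ := by simpa [Finset.bot_eq_empty] using hY.ne_empty
  have hL : ∑ P : Finpartition Y, ∏ B ∈ P.parts, evolve S t g B
      = ∑ ρ : Finpartition Y,
          (∑ π : Finpartition ρ.parts, ∏ b ∈ π.parts, cumulant S t b) * ∏ C ∈ ρ.parts, g C :=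
    LiouAux.master (R := R) Y (fun b => cumulant S t b) g
  rw [hL]
  rw [Finset.sum_congr rfl (fun ρ (_ : ρ ∈ (univ : Finset (Finpartition Y))) => by
    rw [step1 S t ρ.parts (ρ.parts_nonempty hYb), ρ.sup_parts])]
  rw [← Finset.mul_sum]

/-- Group property of the solution operator of the nonlinear Liouville hierarchy:
applying the cumulant expansion at time `t₂` and then at time `t₁` agrees with a
single application at time `t₁ + t₂`. -/
theorem evolve_group_property
    (S : Finset α → ℝ → R)
    (hgrp : ∀ (B : Finset α) (t₁ t₂ : ℝ), S B t₁ * S B t₂ = S B (t₁ + t₂))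
    (hone : ∀ B : Finset α, S B 0 = 1)
    (hinv : ∀ (B : Finset α) (t : ℝ), IsUnit (S B t))
    (g₀ : Finset α → R) (t₁ t₂ : ℝ) :
    ∀ Y : Finset α,
      evolve S t₁ (fun B => evolve S t₂ g₀ B) Y = evolve S (t₁ + t₂) g₀ Y := by
  have hNeq : ∀ Y : Finset α,
      (∑ P : Finpartition Y, ∏ B ∈ P.parts, evolve S t₁ (fun B => evolve S t₂ g₀ B) B)
        = ∑ P : Finpartition Y, ∏ B ∈ P.parts, evolve S (t₁ + t₂) g₀ B := by
    intro Y
    rcases Y.eq_empty_or_nonempty with rfl | hY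
    · refine Finset.sum_congr rfl fun P _ => ?_
      rw [(Finpartition.parts_eq_empty_iff (P := P)).mpr Finset.bot_eq_empty.symm,
        Finset.prod_empty, Finset.prod_empty]
    · rw [key_step S t₁ (fun B => evolve S t₂ g₀ B) Y hY, key_step S t₂ g₀ Y hY,
        key_step S (t₁ + t₂) g₀ Y hY, ← mul_assoc, hgrp]
  suffices H : ∀ (n : ℕ) (Y : Finset α), Y.card = n →
      evolve S t₁ (fun B => evolve S t₂ g₀ B) Y = evolve S (t₁ + t₂) g₀ Y by
    intro Y
    exact H Y.card Y rfl
  intro n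
  induction n using Nat.strong_induction_on with
  | _ n IH =>
  intro Y hYcard
  rcases Y.eq_empty_or_nonempty with rfl | hY
  · rw [evolve_empty, evolve_empty]
  · have hYb : Y ≠ ⊥ := by simpa [Finset.bot_eq_empty] using hY.ne_empty
    have hsplit := hNeq Y
    rw [← Finset.add_sum_erase _ _ (Finset.mem_univ (Finpartition.indiscrete hYb)),
      ← Finset.add_sum_erase _ _ (Finset.mem_univ (Finpartition.indiscrete hYb)),
      Finpartition.indiscrete_parts, Finset.prod_singleton, Finset.prod_singleton] at hsplit
    have hrest : ∑ P ∈ (univ : Finset (Finpartition Y)).erase (Finpartition.indiscrete hYb),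
        ∏ B ∈ P.parts, evolve S t₁ (fun B => evolve S t₂ g₀ B) B
        = ∑ P ∈ (univ : Finset (Finpartition Y)).erase (Finpartition.indiscrete hYb),
        ∏ B ∈ P.parts, evolve S (t₁ + t₂) g₀ B := by
      refine Finset.sum_congr rfl fun P hP => Finset.prod_congr rfl fun B hB => ?_
      have hPne : P ≠ Finpartition.indiscrete hYb := (Finset.mem_erase.mp hP).1
      have hBY : B ≠ Y := fun h => hPne (LiouAux.eq_indiscrete_of_top_mem hYb P (h ▸ hB))
      have hBsub : B ⊆ Y := Finset.le_iff_subset.mp (P.le hB)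
      have hlt : B.card < n := by
        rw [← hYcard]
        exact Finset.card_lt_card (hBsub.ssubset_of_ne hBY)
      exact IH B.card hlt B rfl
    rw [hrest] at hsplit
    exact add_right_cancel hsplit
end

section
/- Let Y be a finite set, |Y| = n, and let g_B(0) ∈ L¹ for each nonempty B ⊆ Y, with each S_B(-t) an isometry of L¹ (composition with a measure-preserving map). Then the cumulant expansion g_Y(t) = Σ_{P partition of Y} A_{|P|}(t, blocks of P) ∏_{B∈P} g_B(0) satisfies ‖g_Y(t)‖₁ ≤ n! e^{n+1} Σ_{P partition of Y} ∏_{B∈P} ‖g_B(0)‖₁; in particular g_Y(t) ∈ L¹ for every t ∈ ℝ. -/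
open Finset

section key

variable {β : Type*} [DecidableEq β]

/-- Injection from ordered-ish data to functions. -/
lemma sum_factorial_card_parts_le (s : Finset β) :
    ∑ P' : Finpartition s, (P'.parts.card).factorial ≤ s.card ^ s.card := by
  classical
  set m := s.card with hm
  have h1 : ∀ P' : Finpartition s, (P'.parts.card).factorial ≤
      Fintype.card (↥P'.parts ↪ Fin m) := by
    intro P'
    rw [Fintype.card_embedding_eq, Fintype.card_coe, Fintype.card_fin]
    calc (P'.parts.card).factorial = (P'.parts.card).descFactorial P'.parts.card := by
          rw [Nat.descFactorial_self]
      _ ≤ m.descFactorial P'.parts.card :=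
          Nat.descFactorial_le _ P'.card_parts_le_card
  calc ∑ P' : Finpartition s, (P'.parts.card).factorial
      ≤ ∑ P' : Finpartition s, Fintype.card (↥P'.parts ↪ Fin m) :=
        Finset.sum_le_sum fun P' _ => h1 P'
    _ = Fintype.card (Σ P' : Finpartition s, (↥P'.parts ↪ Fin m)) := by
        rw [Fintype.card_sigma]
    _ ≤ Fintype.card (↥s → Fin m) := by
        apply Fintype.card_le_of_injective
          (fun x => fun a => x.2 ⟨x.1.part a, x.1.part_mem.2 a.2⟩)
        rintro ⟨P, f⟩ ⟨Q, g⟩ hfg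
        have hfg' : ∀ a : ↥s, f ⟨P.part a, P.part_mem.2 a.2⟩ = g ⟨Q.part a, Q.part_mem.2 a.2⟩ :=
          fun a => congrFun hfg a
        -- parts agree elementwise
        have hpart : ∀ a : ↥s, P.part a = Q.part a := by
          intro a
          ext b
          constructor
          · intro hb
            have hbs : b ∈ s := P.le (P.part_mem.2 a.2) hb
            have h1 : P.part b = P.part a := (P.mem_part_iff_part_eq_part hbs a.2).1 hb
            have h2 : f ⟨P.part b, P.part_mem.2 hbs⟩ = f ⟨P.part a, P.part_mem.2 a.2⟩ := by
              congr 1; exact Subtype.ext h1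
            have h3 : g ⟨Q.part b, Q.part_mem.2 hbs⟩ = g ⟨Q.part a, Q.part_mem.2 a.2⟩ := by
              rw [← hfg' ⟨b, hbs⟩, ← hfg' a]; exact h2
            have h4 : Q.part b = Q.part a := Subtype.ext_iff.1 (g.injective h3)
            exact (Q.mem_part_iff_part_eq_part hbs a.2).2 h4
          · intro hb
            have hbs : b ∈ s := Q.le (Q.part_mem.2 a.2) hb
            have h1 : Q.part b = Q.part a := (Q.mem_part_iff_part_eq_part hbs a.2).1 hb
            have h3 : g ⟨Q.part b, Q.part_mem.2 hbs⟩ = g ⟨Q.part a, Q.part_mem.2 a.2⟩ := by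
              congr 1; exact Subtype.ext h1
            have h2 : f ⟨P.part b, P.part_mem.2 hbs⟩ = f ⟨P.part a, P.part_mem.2 a.2⟩ := by
              rw [hfg' ⟨b, hbs⟩, hfg' a]; exact h3
            have h4 : P.part b = P.part a := Subtype.ext_iff.1 (f.injective h2)
            exact (P.mem_part_iff_part_eq_part hbs a.2).2 h4
        have hPQ : P = Q := by
          ext t
          constructor
          · intro ht
            obtain ⟨a, ha⟩ := P.nonempty_of_mem_parts ht
            have has : a ∈ s := P.le ht ha
            have : P.part a = t := P.part_eq_of_mem ht ha
            rw [← this, hpart ⟨a, has⟩]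
            exact Q.part_mem.2 has
          · intro ht
            obtain ⟨a, ha⟩ := Q.nonempty_of_mem_parts ht
            have has : a ∈ s := Q.le ht ha
            have : Q.part a = t := Q.part_eq_of_mem ht ha
            rw [← this, ← hpart ⟨a, has⟩]
            exact P.part_mem.2 has
        subst hPQ
        suffices hf : f = g by simp [hf]
        ext ⟨B, hB⟩
        obtain ⟨a, ha⟩ := P.nonempty_of_mem_parts hB
        have has : a ∈ s := P.le hB ha
        have hBa : P.part a = B := P.part_eq_of_mem hB ha
        have hBsub : (⟨B, hB⟩ : {x // x ∈ P.parts}) = ⟨P.part a, P.part_mem.2 has⟩ :=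
          Subtype.ext hBa.symm
        rw [hBsub]
        exact congrArg _ (hfg' ⟨a, has⟩)
    _ = m ^ m := by rw [Fintype.card_fun, Fintype.card_fin, Fintype.card_coe]

lemma key_real (s : Finset β) (n : ℕ) (h : s.card ≤ n) :
    ∑ P' : Finpartition s, (((P'.parts.card - 1).factorial : ℝ)) ≤
      (n.factorial : ℝ) * Real.exp (n + 1) := by
  classical
  have h1 : ∑ P' : Finpartition s, (((P'.parts.card - 1).factorial : ℝ)) ≤
      ((∑ P' : Finpartition s, (P'.parts.card).factorial : ℕ) : ℝ) := by
    push_cast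
    apply Finset.sum_le_sum
    intro P' _
    exact_mod_cast Nat.factorial_le (Nat.sub_le _ _)
  set m := s.card with hm
  have h2 : ((∑ P' : Finpartition s, (P'.parts.card).factorial : ℕ) : ℝ) ≤ (m : ℝ) ^ m := by
    exact_mod_cast sum_factorial_card_parts_le s
  have h3 : (m : ℝ) ^ m ≤ (m.factorial : ℝ) * Real.exp m := by
    have := Real.pow_div_factorial_le_exp (x := (m : ℝ)) (Nat.cast_nonneg m) m
    rw [div_le_iff₀ (by positivity)] at this
    linarith [this]
  have h4 : (m.factorial : ℝ) * Real.exp m ≤ (n.factorial : ℝ) * Real.exp (n + 1) := by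
    apply mul_le_mul
    · exact_mod_cast Nat.factorial_le h
    · apply Real.exp_le_exp.2; push_cast; linarith [(Nat.cast_le (α := ℝ)).2 h]
    · positivity
    · positivity
  linarith

end key

/-- `L¹`-estimate for the cumulant expansion.  The commuting evolution operators and
the data live in a normed commutative ring (e.g. an algebra of functions with the
`L¹`-norm on each tensor factor); the isometry property of `S_B(-t)` and the tensor
multiplicativity of the `L¹`-norm are encoded in the hypothesis `hiso`.  Then the
cumulant expansion `g_Y(t)` is norm-bounded by
`n! e^(n+1) ∑_{P partition of Y} ∏_{B ∈ P} ‖g_B(0)‖` where `n = |Y|`. -/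
theorem cumulant_expansion_norm_bound
    {α : Type*} [DecidableEq α] {A : Type*} [NormedCommRing A]
    (Y : Finset α) (S : Finset α → A) (g₀ : Finset α → A)
    (hiso : ∀ (P : Finpartition Y) (P' : Finpartition P.parts),
      ‖(∏ Z ∈ P'.parts, S (Z.sup id)) * ∏ B ∈ P.parts, g₀ B‖ =
        ∏ B ∈ P.parts, ‖g₀ B‖) :
    ‖∑ P : Finpartition Y,
        ∑ P' : Finpartition P.parts,
          ((-1 : ℤ) ^ (P'.parts.card - 1) * ((P'.parts.card - 1).factorial : ℤ)) •
            ((∏ Z ∈ P'.parts, S (Z.sup id)) * ∏ B ∈ P.parts, g₀ B)‖ ≤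
      (Y.card.factorial : ℝ) * Real.exp (Y.card + 1) *
        ∑ P : Finpartition Y, ∏ B ∈ P.parts, ‖g₀ B‖ := by
  classical
  have hterm : ∀ (P : Finpartition Y) (P' : Finpartition P.parts),
      ‖(((-1 : ℤ) ^ (P'.parts.card - 1) * ((P'.parts.card - 1).factorial : ℤ)) •
        ((∏ Z ∈ P'.parts, S (Z.sup id)) * ∏ B ∈ P.parts, g₀ B))‖ ≤
      ((P'.parts.card - 1).factorial : ℝ) * ∏ B ∈ P.parts, ‖g₀ B‖ := by
    intro P P'
    refine (norm_zsmul_le _ _).trans_eq ?_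
    rw [hiso P P']
    congr 1
    simp [Int.norm_eq_abs, abs_mul, abs_pow]
  calc ‖∑ P : Finpartition Y,
        ∑ P' : Finpartition P.parts,
          ((-1 : ℤ) ^ (P'.parts.card - 1) * ((P'.parts.card - 1).factorial : ℤ)) •
            ((∏ Z ∈ P'.parts, S (Z.sup id)) * ∏ B ∈ P.parts, g₀ B)‖
      ≤ ∑ P : Finpartition Y, ∑ P' : Finpartition P.parts,
          ‖(((-1 : ℤ) ^ (P'.parts.card - 1) * ((P'.parts.card - 1).factorial : ℤ)) •
            ((∏ Z ∈ P'.parts, S (Z.sup id)) * ∏ B ∈ P.parts, g₀ B))‖ :=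
        (norm_sum_le _ _).trans (Finset.sum_le_sum fun P _ => norm_sum_le _ _)
    _ ≤ ∑ P : Finpartition Y, ∑ P' : Finpartition P.parts,
          ((P'.parts.card - 1).factorial : ℝ) * ∏ B ∈ P.parts, ‖g₀ B‖ :=
        Finset.sum_le_sum fun P _ => Finset.sum_le_sum fun P' _ => hterm P P'
    _ = ∑ P : Finpartition Y,
          (∑ P' : Finpartition P.parts, ((P'.parts.card - 1).factorial : ℝ)) *
            ∏ B ∈ P.parts, ‖g₀ B‖ := by
        simp [Finset.sum_mul]
    _ ≤ ∑ P : Finpartition Y,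
          (Y.card.factorial : ℝ) * Real.exp (Y.card + 1) * ∏ B ∈ P.parts, ‖g₀ B‖ := by
        apply Finset.sum_le_sum
        intro P _
        apply mul_le_mul_of_nonneg_right
        · exact key_real P.parts Y.card P.card_parts_le_card
        · exact Finset.prod_nonneg fun B _ => norm_nonneg _
    _ = (Y.card.factorial : ℝ) * Real.exp (Y.card + 1) *
          ∑ P : Finpartition Y, ∏ B ∈ P.parts, ‖g₀ B‖ := by
        rw [Finset.mul_sum]
end

section
/- If the initial data satisfy the chaos condition g_B(0) = 0 for all B with |B| ≥ 2 and g_{{x}}(0) = g₁(0, x), then the cumulant expansion solution reduces to a single term: g_Y(t) = A_{|Y|}(t, {x}_{x∈Y}) ∏_{x∈Y} g₁(0, x), where A_{|Y|}(t,·) is the cumulant over partitions of Y into singleton clusters; moreover ‖g_Y(t)‖₁ ≤ n! e^{n+1} ‖g₁(0)‖₁^n for |Y| = n, assuming each S_B(-t) is an L¹-isometry. -/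
open Finset

namespace ChaosAux

variable {α : Type*} [DecidableEq α]

lemma mem_sup_id {Y : Finset α} {Z : Finset (Finset α)}
    (hZ : Z ⊆ Y.map ⟨singleton, singleton_injective⟩) {x : α} :
    x ∈ Z.sup id ↔ {x} ∈ Z := by
  rw [Finset.mem_sup]
  constructor
  · rintro ⟨t, ht, hxt⟩
    obtain ⟨a, -, rfl⟩ := Finset.mem_map.1 (hZ ht)
    simp only [id_eq, Function.Embedding.coeFn_mk, Finset.mem_singleton] at hxt
    subst hxt; exact ht
  · exact fun h => ⟨{x}, h, mem_singleton_self x⟩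

lemma map_sup_id {Y : Finset α} {Z : Finset (Finset α)}
    (hZ : Z ⊆ Y.map ⟨singleton, singleton_injective⟩) :
    (Z.sup id).map ⟨singleton, singleton_injective⟩ = Z := by
  ext t
  simp only [Finset.mem_map, Function.Embedding.coeFn_mk]
  constructor
  · rintro ⟨x, hx, rfl⟩
    exact (mem_sup_id hZ).1 hx
  · intro ht
    obtain ⟨a, -, rfl⟩ := Finset.mem_map.1 (hZ ht)
    exact ⟨a, (mem_sup_id hZ).2 ht, rfl⟩

lemma sup_id_map (B : Finset α) :
    (B.map (⟨singleton, singleton_injective⟩ : α ↪ Finset α)).sup id = B := by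
  ext x
  simp [Finset.mem_sup]

/-- Turn a finpartition of the set of singletons of `Y` into a finpartition of `Y`,
sending each cluster of singletons to its union. -/
def toY (Y : Finset α)
    (P' : Finpartition (Y.map (⟨singleton, singleton_injective⟩ : α ↪ Finset α))) :
    Finpartition Y where
  parts := P'.parts.image (fun Z => Z.sup id)
  supIndep := by
    rw [Finset.supIndep_iff_pairwiseDisjoint]
    intro B₁ hB₁ B₂ hB₂ hne
    simp only [Finset.coe_image, Set.mem_image, Finset.mem_coe] at hB₁ hB₂
    obtain ⟨Z₁, hZ₁, rfl⟩ := hB₁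
    obtain ⟨Z₂, hZ₂, rfl⟩ := hB₂
    have hZne : Z₁ ≠ Z₂ := fun h => hne (by rw [h])
    have hd : Disjoint Z₁ Z₂ := P'.disjoint hZ₁ hZ₂ hZne
    simp only [Function.onFun, id_eq]
    rw [Finset.disjoint_left]
    intro x hx1 hx2
    exact (Finset.disjoint_left.1 hd) ((mem_sup_id (P'.le hZ₁)).1 hx1)
      ((mem_sup_id (P'.le hZ₂)).1 hx2)
  sup_parts := by
    ext x
    simp only [Finset.mem_sup, Finset.mem_image]
    constructor
    · rintro ⟨B, ⟨Z, hZ, rfl⟩, hx⟩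
      have := (mem_sup_id (P'.le hZ)).1 hx
      have h2 : ({x} : Finset α) ∈ Y.map ⟨singleton, singleton_injective⟩ := P'.le hZ this
      obtain ⟨a, ha, h⟩ := Finset.mem_map.1 h2
      simp only [Function.Embedding.coeFn_mk, Finset.singleton_injective.eq_iff] at h
      rwa [← h]
    · intro hx
      have h2 : ({x} : Finset α) ∈ Y.map ⟨singleton, singleton_injective⟩ :=
        Finset.mem_map.2 ⟨x, hx, rfl⟩
      rw [← P'.sup_parts, Finset.mem_sup] at h2
      obtain ⟨Z, hZ, hxZ⟩ := h2
      exact ⟨Z.sup id, ⟨Z, hZ, rfl⟩, (mem_sup_id (P'.le hZ)).2 hxZ⟩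
  bot_notMem := by
    simp only [Finset.bot_eq_empty, Finset.mem_image]
    rintro ⟨Z, hZ, hZ0⟩
    obtain ⟨t, ht⟩ := P'.nonempty_of_mem_parts hZ
    obtain ⟨a, -, rfl⟩ := Finset.mem_map.1 (P'.le hZ ht)
    have : a ∈ Z.sup id := (mem_sup_id (P'.le hZ)).2 ht
    rw [hZ0] at this
    exact absurd this (Finset.notMem_empty a)

/-- Turn a finpartition of `Y` into a finpartition of the set of singletons of `Y`. -/
def toSing (Y : Finset α) (Q : Finpartition Y) :
    Finpartition (Y.map (⟨singleton, singleton_injective⟩ : α ↪ Finset α)) where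
  parts := Q.parts.image (fun B => B.map ⟨singleton, singleton_injective⟩)
  supIndep := by
    rw [Finset.supIndep_iff_pairwiseDisjoint]
    intro Z₁ hZ₁ Z₂ hZ₂ hne
    simp only [Finset.coe_image, Set.mem_image, Finset.mem_coe] at hZ₁ hZ₂
    obtain ⟨B₁, hB₁, rfl⟩ := hZ₁
    obtain ⟨B₂, hB₂, rfl⟩ := hZ₂
    have hBne : B₁ ≠ B₂ := fun h => hne (by rw [h])
    exact (Finset.disjoint_map _).2 (Q.disjoint hB₁ hB₂ hBne)
  sup_parts := by
    ext t
    simp only [Finset.mem_sup, Finset.mem_image, Finset.mem_map, Function.Embedding.coeFn_mk]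
    constructor
    · rintro ⟨Z, ⟨B, hB, rfl⟩, ht⟩
      obtain ⟨a, ha, rfl⟩ := Finset.mem_map.1 ht
      exact ⟨a, Q.le hB ha, rfl⟩
    · rintro ⟨a, ha, rfl⟩
      obtain ⟨B, hB, haB⟩ := Q.exists_mem ha
      exact ⟨B.map _, ⟨B, hB, rfl⟩, Finset.mem_map.2 ⟨a, haB, rfl⟩⟩
  bot_notMem := by
    simp only [Finset.bot_eq_empty, Finset.mem_image]
    rintro ⟨B, hB, hB0⟩
    rw [Finset.map_eq_empty] at hB0
    exact Q.bot_notMem (by rw [Finset.bot_eq_empty, ← hB0]; exact hB)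

lemma toSing_toY (Y : Finset α)
    (P' : Finpartition (Y.map (⟨singleton, singleton_injective⟩ : α ↪ Finset α))) :
    toSing Y (toY Y P') = P' := by
  ext1
  show (P'.parts.image _).image _ = P'.parts
  rw [Finset.image_image]
  refine Finset.image_congr (fun Z hZ => ?_) |>.trans (Finset.image_id)
  exact map_sup_id (P'.le hZ)

lemma toY_toSing (Y : Finset α) (Q : Finpartition Y) : toY Y (toSing Y Q) = Q := by
  ext1
  show (Q.parts.image _).image _ = Q.parts
  rw [Finset.image_image]
  refine Finset.image_congr (fun B hB => ?_) |>.trans (Finset.image_id)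
  exact sup_id_map B

/-- The equivalence between finpartitions of the singletons of `Y` and finpartitions of `Y`. -/
def partEquiv (Y : Finset α) :
    Finpartition (Y.map (⟨singleton, singleton_injective⟩ : α ↪ Finset α)) ≃ Finpartition Y :=
  ⟨toY Y, toSing Y, toSing_toY Y, toY_toSing Y⟩

lemma supInjOn (Y : Finset α)
    (P' : Finpartition (Y.map (⟨singleton, singleton_injective⟩ : α ↪ Finset α))) :
    Set.InjOn (fun Z : Finset (Finset α) => Z.sup id) P'.parts := by
  intro Z₁ h₁ Z₂ h₂ h
  have h' : Z₁.sup id = Z₂.sup id := h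
  have := map_sup_id (P'.le h₁)
  rw [h'] at this
  rw [← this, map_sup_id (P'.le h₂)]

lemma card_toY (Y : Finset α)
    (P' : Finpartition (Y.map (⟨singleton, singleton_injective⟩ : α ↪ Finset α))) :
    (toY Y P').parts.card = P'.parts.card :=
  Finset.card_image_of_injOn (supInjOn Y P')

lemma prod_toY {A : Type*} [CommMonoid A] (S : Finset α → A) (Y : Finset α)
    (P' : Finpartition (Y.map (⟨singleton, singleton_injective⟩ : α ↪ Finset α))) :
    ∏ B ∈ (toY Y P').parts, S B = ∏ Z ∈ P'.parts, S (Z.sup id) :=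
  Finset.prod_image (supInjOn Y P')

end ChaosAux

namespace ChaosAux

variable {α : Type*} [DecidableEq α]

lemma eq_bot_of_small (Y : Finset α) (P : Finpartition Y)
    (h : ∀ B ∈ P.parts, ¬ 2 ≤ B.card) : P = ⊥ := by
  ext1
  rw [Finpartition.parts_bot]
  ext B
  rw [Finset.mem_map]
  constructor
  · intro hB
    have h1 : 1 ≤ B.card := Finset.card_pos.2 (P.nonempty_of_mem_parts hB)
    have h2 := h B hB
    have hcard : B.card = 1 := by omega
    obtain ⟨a, rfl⟩ := Finset.card_eq_one.1 hcard
    exact ⟨a, P.le hB (Finset.mem_singleton_self a), rfl⟩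
  · rintro ⟨a, ha, rfl⟩
    have hmem := P.part_mem.2 ha
    have h1 : 1 ≤ (P.part a).card := Finset.card_pos.2 ⟨a, P.mem_part ha⟩
    have h2 := h _ hmem
    have hcard : (P.part a).card = 1 := by omega
    obtain ⟨b, hb⟩ := Finset.card_eq_one.1 hcard
    have hab : a ∈ ({b} : Finset α) := hb ▸ P.mem_part ha
    rw [Finset.mem_singleton] at hab
    show ({a} : Finset α) ∈ P.parts
    rw [hab, ← hb]
    exact hmem

/-- Counting: the sum of `(k_P - 1)!` over all finpartitions `P` of `Y` is at most
`|Y| ^ |Y|`, via injecting linearly ordered partitions into functions `Y → Fin |Y|`. -/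
lemma count_le (Y : Finset α) :
    ∑ P : Finpartition Y, (P.parts.card - 1).factorial ≤ Y.card ^ Y.card := by
  have step1 : ∑ P : Finpartition Y, (P.parts.card - 1).factorial ≤
      ∑ P : Finpartition Y, (P.parts.card).factorial :=
    Finset.sum_le_sum fun P _ => Nat.factorial_le (Nat.sub_le _ _)
  refine step1.trans ?_
  have step2 : ∀ P : Finpartition Y,
      (P.parts.card).factorial = Fintype.card (↥P.parts ≃ Fin P.parts.card) := by
    intro P
    have e : ↥P.parts ≃ Fin P.parts.card :=
      (Fintype.equivFin _).trans (finCongr (Fintype.card_coe _))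
    rw [Fintype.card_equiv e, Fintype.card_coe]
  calc ∑ P : Finpartition Y, (P.parts.card).factorial
      = ∑ P : Finpartition Y, Fintype.card (↥P.parts ≃ Fin P.parts.card) := by
        exact Finset.sum_congr rfl fun P _ => step2 P
    _ = Fintype.card (Σ P : Finpartition Y, (↥P.parts ≃ Fin P.parts.card)) :=
        Fintype.card_sigma.symm
    _ ≤ Fintype.card (↥Y → Fin Y.card) := ?_
    _ = Y.card ^ Y.card := by simp [Fintype.card_fun]
  refine Fintype.card_le_of_injective
    (fun pe x => Fin.castLE pe.1.card_parts_le_card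
      (pe.2 ⟨pe.1.part x.1, pe.1.part_mem.2 x.2⟩)) ?_
  rintro ⟨P, e⟩ ⟨Q, d⟩ hfun
  have key : ∀ x : α, ∀ hx : x ∈ Y,
      Fin.castLE P.card_parts_le_card (e ⟨P.part x, P.part_mem.2 hx⟩) =
      Fin.castLE Q.card_parts_le_card (d ⟨Q.part x, Q.part_mem.2 hx⟩) := by
    intro x hx
    exact congrFun hfun ⟨x, hx⟩
  -- same-part relations agree
  have hrel : ∀ x y : α, ∀ hx : x ∈ Y, ∀ hy : y ∈ Y,
      (P.part x = P.part y ↔ Q.part x = Q.part y) := by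
    intro x y hx hy
    constructor
    · intro hxy
      have : Fin.castLE Q.card_parts_le_card (d ⟨Q.part x, Q.part_mem.2 hx⟩) =
          Fin.castLE Q.card_parts_le_card (d ⟨Q.part y, Q.part_mem.2 hy⟩) := by
        rw [← key x hx, ← key y hy]
        congr 1
        exact congrArg e (Subtype.ext hxy)
      have h2 := d.injective (Fin.castLE_injective _ this)
      exact congrArg Subtype.val h2
    · intro hxy
      have : Fin.castLE P.card_parts_le_card (e ⟨P.part x, P.part_mem.2 hx⟩) =
          Fin.castLE P.card_parts_le_card (e ⟨P.part y, P.part_mem.2 hy⟩) := by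
        rw [key x hx, key y hy]
        congr 1
        exact congrArg d (Subtype.ext hxy)
      have h2 := e.injective (Fin.castLE_injective _ this)
      exact congrArg Subtype.val h2
  have hpart : ∀ x : α, x ∈ Y → P.part x = Q.part x := by
    intro x hx
    ext y
    constructor
    · intro hy
      have hyY : y ∈ Y := P.le (P.part_mem.2 hx) hy
      have : P.part y = P.part x := (P.mem_part_iff_part_eq_part hyY hx).1 hy
      have : Q.part y = Q.part x := (hrel y x hyY hx).1 this
      exact (Q.mem_part_iff_part_eq_part hyY hx).2 this
    · intro hy
      have hyY : y ∈ Y := Q.le (Q.part_mem.2 hx) hy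
      have : Q.part y = Q.part x := (Q.mem_part_iff_part_eq_part hyY hx).1 hy
      have : P.part y = P.part x := (hrel y x hyY hx).2 this
      exact (P.mem_part_iff_part_eq_part hyY hx).2 this
  have hPQ : P = Q := by
    ext1
    ext B
    constructor
    · intro hB
      obtain ⟨a, ha⟩ := P.nonempty_of_mem_parts hB
      have haY : a ∈ Y := P.le hB ha
      rw [← P.part_eq_of_mem hB ha, hpart a haY]
      exact Q.part_mem.2 haY
    · intro hB
      obtain ⟨a, ha⟩ := Q.nonempty_of_mem_parts hB
      have haY : a ∈ Y := Q.le hB ha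
      rw [← Q.part_eq_of_mem hB ha, ← hpart a haY]
      exact P.part_mem.2 haY
  subst hPQ
  have hed : e = d := by
    ext B
    obtain ⟨B, hB⟩ := B
    obtain ⟨a, ha⟩ := P.nonempty_of_mem_parts hB
    have haY : a ∈ Y := P.le hB ha
    have hBa : P.part a = B := P.part_eq_of_mem hB ha
    have := key a haY
    rw [Fin.castLE_inj] at this  -- maybe wrong lemma name
    have h2 : e ⟨P.part a, P.part_mem.2 haY⟩ = d ⟨P.part a, P.part_mem.2 haY⟩ := this
    have h3 : (⟨P.part a, P.part_mem.2 haY⟩ : ↥P.parts) = ⟨B, hB⟩ := Subtype.ext hBa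
    rw [h3] at h2
    exact congrArg Fin.val h2
  subst hed
  rfl

end ChaosAux

/-- Under the chaos condition (`g_B(0) = 0` for `|B| ≥ 2`, `g_{{x}}(0) = g₁ x`), the
cumulant expansion solution reduces to the single term
`g_Y(t) = A_{|Y|}(t, singletons of Y) ∏_{x∈Y} g₁ x`, the `|Y|`-th order cumulant
being a sum over all partitions of `Y`; moreover, if the operators act as
`L¹`-isometries (hypothesis `hiso`), then `‖g_Y(t)‖ ≤ n! e^(n+1) ∏_{x∈Y} ‖g₁ x‖`. -/
theorem chaos_condition_cumulant_expansion
    {α : Type*} [DecidableEq α] {A : Type*} [NormedCommRing A]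
    (Y : Finset α) (S : Finset α → A) (g₀ : Finset α → A) (g₁ : α → A)
    (hchaos : ∀ B : Finset α, 2 ≤ B.card → g₀ B = 0)
    (hsing : ∀ x : α, g₀ {x} = g₁ x)
    (hiso : ∀ P : Finpartition Y,
      ‖(∏ B ∈ P.parts, S B) * ∏ x ∈ Y, g₁ x‖ = ∏ x ∈ Y, ‖g₁ x‖) :
    (∑ P : Finpartition Y,
        ∑ P' : Finpartition P.parts,
          ((-1 : ℤ) ^ (P'.parts.card - 1) * ((P'.parts.card - 1).factorial : ℤ)) •
            ((∏ Z ∈ P'.parts, S (Z.sup id)) * ∏ B ∈ P.parts, g₀ B)) =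
      (∑ P : Finpartition Y,
        ((-1 : ℤ) ^ (P.parts.card - 1) * ((P.parts.card - 1).factorial : ℤ)) •
          ∏ B ∈ P.parts, S B) * ∏ x ∈ Y, g₁ x ∧
    ‖∑ P : Finpartition Y,
        ∑ P' : Finpartition P.parts,
          ((-1 : ℤ) ^ (P'.parts.card - 1) * ((P'.parts.card - 1).factorial : ℤ)) •
            ((∏ Z ∈ P'.parts, S (Z.sup id)) * ∏ B ∈ P.parts, g₀ B)‖ ≤
      (Y.card.factorial : ℝ) * Real.exp (Y.card + 1) * ∏ x ∈ Y, ‖g₁ x‖ := by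
  classical
  have hzero : ∀ P : Finpartition Y, P ≠ ⊥ →
      (∑ P' : Finpartition P.parts,
          ((-1 : ℤ) ^ (P'.parts.card - 1) * ((P'.parts.card - 1).factorial : ℤ)) •
            ((∏ Z ∈ P'.parts, S (Z.sup id)) * ∏ B ∈ P.parts, g₀ B)) = 0 := by
    intro P hP
    have hex : ∃ B ∈ P.parts, 2 ≤ B.card := by
      by_contra h
      push_neg at h
      exact hP (ChaosAux.eq_bot_of_small Y P (fun B hB => by have := h B hB; omega))
    obtain ⟨B, hB, h2⟩ := hex
    have hprod : ∏ B ∈ P.parts, g₀ B = 0 := Finset.prod_eq_zero hB (hchaos B h2)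
    exact Finset.sum_eq_zero fun P' _ => by rw [hprod, mul_zero, smul_zero]
  have hbotprod : ∏ B ∈ (⊥ : Finpartition Y).parts, g₀ B = ∏ x ∈ Y, g₁ x := by
    rw [Finpartition.parts_bot, Finset.prod_map]
    exact Finset.prod_congr rfl fun x _ => hsing x
  have hmain : (∑ P : Finpartition Y,
        ∑ P' : Finpartition P.parts,
          ((-1 : ℤ) ^ (P'.parts.card - 1) * ((P'.parts.card - 1).factorial : ℤ)) •
            ((∏ Z ∈ P'.parts, S (Z.sup id)) * ∏ B ∈ P.parts, g₀ B)) =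
      (∑ P : Finpartition Y,
        ((-1 : ℤ) ^ (P.parts.card - 1) * ((P.parts.card - 1).factorial : ℤ)) •
          ∏ B ∈ P.parts, S B) * ∏ x ∈ Y, g₁ x := by
    rw [Fintype.sum_eq_single (⊥ : Finpartition Y) hzero, Finset.sum_mul]
    refine Fintype.sum_equiv (ChaosAux.partEquiv Y) _ _ (fun P' => ?_)
    show ((-1 : ℤ) ^ (P'.parts.card - 1) * ((P'.parts.card - 1).factorial : ℤ)) •
            ((∏ Z ∈ P'.parts, S (Z.sup id)) * ∏ B ∈ (⊥ : Finpartition Y).parts, g₀ B) = _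
    rw [hbotprod,
      show (ChaosAux.partEquiv Y) P' = ChaosAux.toY Y P' from rfl,
      ChaosAux.card_toY, ChaosAux.prod_toY, smul_mul_assoc]
  refine ⟨hmain, ?_⟩
  rw [hmain, Finset.sum_mul]
  simp only [smul_mul_assoc]
  have hGnn : (0:ℝ) ≤ ∏ x ∈ Y, ‖g₁ x‖ := Finset.prod_nonneg fun x _ => norm_nonneg _
  calc ‖∑ P : Finpartition Y,
        ((-1 : ℤ) ^ (P.parts.card - 1) * ((P.parts.card - 1).factorial : ℤ)) •
          ((∏ B ∈ P.parts, S B) * ∏ x ∈ Y, g₁ x)‖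
      ≤ ∑ P : Finpartition Y,
        ‖((-1 : ℤ) ^ (P.parts.card - 1) * ((P.parts.card - 1).factorial : ℤ)) •
          ((∏ B ∈ P.parts, S B) * ∏ x ∈ Y, g₁ x)‖ := norm_sum_le _ _
    _ ≤ ∑ P : Finpartition Y,
        ((P.parts.card - 1).factorial : ℝ) * ∏ x ∈ Y, ‖g₁ x‖ := by
        refine Finset.sum_le_sum fun P _ => ?_
        refine (norm_zsmul_le _ _).trans ?_
        rw [hiso P]
        apply mul_le_mul_of_nonneg_right _ hGnn
        rw [Int.norm_eq_abs]
        push_cast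
        rw [abs_mul, abs_pow, abs_neg, abs_one, one_pow, one_mul,
          abs_of_nonneg (by positivity)]
    _ = (∑ P : Finpartition Y, ((P.parts.card - 1).factorial : ℝ)) * ∏ x ∈ Y, ‖g₁ x‖ :=
        (Finset.sum_mul _ _ _).symm
    _ ≤ ((Y.card : ℝ) ^ Y.card) * ∏ x ∈ Y, ‖g₁ x‖ := by
        refine mul_le_mul_of_nonneg_right ?_ hGnn
        have := ChaosAux.count_le Y
        calc (∑ P : Finpartition Y, ((P.parts.card - 1).factorial : ℝ))
            = ((∑ P : Finpartition Y, (P.parts.card - 1).factorial : ℕ) : ℝ) := by push_cast; rfl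
          _ ≤ ((Y.card ^ Y.card : ℕ) : ℝ) := Nat.cast_le.2 this
          _ = (Y.card : ℝ) ^ Y.card := by push_cast; rfl
    _ ≤ (Y.card.factorial : ℝ) * Real.exp (Y.card + 1) * ∏ x ∈ Y, ‖g₁ x‖ := by
        refine mul_le_mul_of_nonneg_right ?_ hGnn
        have h1 : (Y.card : ℝ) ^ Y.card / (Y.card.factorial : ℝ) ≤ Real.exp Y.card :=
          Real.pow_div_factorial_le_exp _ (Nat.cast_nonneg _) Y.card
        have h2 : Real.exp (Y.card : ℝ) ≤ Real.exp ((Y.card : ℝ) + 1) :=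
          Real.exp_le_exp.2 (by linarith)
        have hfac : (0:ℝ) < (Y.card.factorial : ℝ) := by positivity
        rw [div_le_iff₀ hfac] at h1
        calc (Y.card : ℝ) ^ Y.card ≤ Real.exp (Y.card : ℝ) * (Y.card.factorial : ℝ) := h1
          _ ≤ Real.exp ((Y.card : ℝ) + 1) * (Y.card.factorial : ℝ) :=
              mul_le_mul_of_nonneg_right h2 hfac.le
          _ = (Y.card.factorial : ℝ) * Real.exp ((Y.card : ℝ) + 1) := mul_comm _ _
end
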